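/- Let σ be a relational vocabulary, 𝒜 a σ-structure, k ≥ 1, and s = [a_1,…,a_i] ∈ A^{≤k} a non-repeating sequence (the a_j are pairwise distinct). Then the map sending each prefix [a_1,…,a_j] of s to its last element a_j is an isomorphism from the substructure of E_k 𝒜 induced on the set of prefixes of s onto the substructure of 𝒜 induced on {a_1,…,a_i}. -/

import Mathlib

/-- A relational vocabulary: a type of relation symbols with arities. -/
structure RelVocab : Type 1 where
  Rel : Type
  ar : Rel → ℕ

/-- A structure for a relational vocabulary. -/
structure RelStruct (σ : RelVocab) : Type 1 where
  carrier : Type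
  rel : ∀ R : σ.Rel, (Fin (σ.ar R) → carrier) → Prop

/-- Homomorphisms of relational structures. -/
def IsHom {σ : RelVocab} (𝒜 ℬ : RelStruct σ) (h : 𝒜.carrier → ℬ.carrier) : Prop :=
  ∀ (R : σ.Rel) (v : Fin (σ.ar R) → 𝒜.carrier), 𝒜.rel R v → ℬ.rel R (fun i => h (v i))

/-- Nonempty sequences over `A` of length at most `k`: the universe of `E_k 𝒜`. -/
def EkC (k : ℕ) (A : Type) : Type :=
  {l : List A // l ≠ [] ∧ l.length ≤ k}

/-- The counit: the last element of a sequence. -/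
def eps {k : ℕ} {A : Type} (s : EkC k A) : A :=
  s.1.getLast s.2.1

/-- Comparability in the prefix order. -/
def Cmp {A : Type} (s t : List A) : Prop :=
  s <+: t ∨ t <+: s

/-- The Ehrenfeucht–Fraïssé comonad `E_k` on structures. -/
def Ek {σ : RelVocab} (k : ℕ) (𝒜 : RelStruct σ) : RelStruct σ where
  carrier := EkC k 𝒜.carrier
  rel R v := (∀ i j, Cmp (v i).1 (v j).1) ∧ 𝒜.rel R (fun i => eps (v i))

/-- The prefix of `s` of length `i+1`. -/
def prefAt {k : ℕ} {A : Type} (s : EkC k A) (i : Fin s.1.length) : EkC k A :=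
  ⟨s.1.take (i + 1), by
    constructor
    · apply List.ne_nil_of_length_pos
      rw [List.length_take]
      exact lt_min (Nat.succ_pos _) (Nat.lt_of_le_of_lt (Nat.zero_le _) i.2)
    · rw [List.length_take]
      exact le_trans (min_le_right _ _) s.2.2⟩

/-- The Kleisli coextension `f* [a_1,…,a_j] = [f[a_1],…,f[a_1,…,a_j]]`. -/
def coext {k : ℕ} {A B : Type} (f : EkC k A → B) (s : EkC k A) : EkC k B :=
  ⟨List.ofFn (fun i : Fin s.1.length => f (prefAt s i)), by
    constructor
    · apply List.ne_nil_of_length_pos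
      rw [List.length_ofFn]
      exact List.length_pos_iff.mpr s.2.1
    · rw [List.length_ofFn]
      exact s.2.2⟩

/-- The substructure of `ℳ` induced on a subset `S` of its universe. -/
def induced {σ : RelVocab} (ℳ : RelStruct σ) (S : Set ℳ.carrier) : RelStruct σ where
  carrier := {x // x ∈ S}
  rel R v := ℳ.rel R fun i => (v i).1


lemma getLast_take_aux {A : Type} (l : List A) (n : ℕ) (hn : n < l.length)
    (h : l.take (n+1) ≠ []) : (l.take (n+1)).getLast h = l[n] := by
  rw [List.getLast_eq_getElem]
  have hl : (l.take (n+1)).length = n+1 := by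
    simp [List.length_take, Nat.succ_le_of_lt hn]
  simp only [hl, Nat.add_sub_cancel]
  rw [List.getElem_take]

/-- For a non-repeating `s ∈ A^{≤k}`, the map sending each prefix of `s` to its last
element is an isomorphism from the substructure of `E_k 𝒜` induced on the prefixes of
`s` onto the substructure of `𝒜` induced on the entries of `s`. -/
theorem stmt19 (σ : RelVocab) (𝒜 : RelStruct σ) (k : ℕ) (hk : 1 ≤ k)
    (s : EkC k 𝒜.carrier) (hs : s.1.Nodup) :
    ∃ (e : (induced (Ek k 𝒜) {t | t.1 <+: s.1}).carrier →
        (induced 𝒜 {a | a ∈ s.1}).carrier)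
      (e' : (induced 𝒜 {a | a ∈ s.1}).carrier →
        (induced (Ek k 𝒜) {t | t.1 <+: s.1}).carrier),
      (∀ t, (e t).1 = eps t.1) ∧
      Function.LeftInverse e' e ∧ Function.RightInverse e' e ∧
      IsHom (induced (Ek k 𝒜) {t | t.1 <+: s.1}) (induced 𝒜 {a | a ∈ s.1}) e ∧
      IsHom (induced 𝒜 {a | a ∈ s.1}) (induced (Ek k 𝒜) {t | t.1 <+: s.1}) e' := by
  classical
  -- the forward map
  have hmem : ∀ t : (induced (Ek k 𝒜) {t | t.1 <+: s.1}).carrier, eps t.1 ∈ s.1 := by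
    intro t
    have hp : t.1.1 <+: s.1 := t.2
    exact hp.sublist.mem (List.getLast_mem t.1.2.1)
  set e : (induced (Ek k 𝒜) {t | t.1 <+: s.1}).carrier →
      (induced 𝒜 {a | a ∈ s.1}).carrier := fun t => ⟨eps t.1, hmem t⟩ with he
  -- the backward map
  have hidx : ∀ a : (induced 𝒜 {a | a ∈ s.1}).carrier,
      s.1.idxOf a.1 < s.1.length := fun a => List.idxOf_lt_length_iff.mpr a.2
  set e' : (induced 𝒜 {a | a ∈ s.1}).carrier →
      (induced (Ek k 𝒜) {t | t.1 <+: s.1}).carrier := fun a =>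
    ⟨⟨s.1.take (s.1.idxOf a.1 + 1), by
      constructor
      · apply List.ne_nil_of_length_pos
        rw [List.length_take]
        exact lt_min (Nat.succ_pos _) (Nat.lt_of_le_of_lt (Nat.zero_le _) (hidx a))
      · rw [List.length_take]
        exact le_trans (min_le_right _ _) s.2.2⟩, List.take_prefix _ _⟩ with he'
  -- e (e' a) = a
  have hre : ∀ a, e (e' a) = a := by
    intro a
    apply Subtype.ext
    show eps (e' a).1 = a.1
    exact (getLast_take_aux s.1 _ (hidx a) _).trans (List.getElem_idxOf (hidx a))
  -- e' (e t) = t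
  have hle : ∀ t, e' (e t) = t := by
    intro t
    apply Subtype.ext
    apply Subtype.ext
    show s.1.take (s.1.idxOf (eps t.1) + 1) = t.1.1
    have hp : t.1.1 <+: s.1 := t.2
    have hne : t.1.1 ≠ [] := t.1.2.1
    have hlen : 0 < t.1.1.length := List.length_pos_iff.mpr hne
    have hlt : t.1.1.length - 1 < s.1.length :=
      lt_of_lt_of_le (Nat.sub_lt hlen one_pos) hp.length_le
    have hget : eps t.1 = s.1[t.1.1.length - 1] := by
      rw [show eps t.1 = t.1.1.getLast t.1.2.1 from rfl, List.getLast_eq_getElem]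
      exact hp.getElem _
    rw [hget, List.Nodup.idxOf_getElem hs _ hlt, Nat.sub_add_cancel hlen]
    exact (List.prefix_iff_eq_take.mp hp).symm
  refine ⟨e, e', fun t => rfl, hle, hre, ?_, ?_⟩
  · intro R v h
    exact h.2
  · intro R v h
    refine ⟨?_, ?_⟩
    · intro i j
      unfold Cmp
      rcases le_total (s.1.idxOf (v i).1 + 1) (s.1.idxOf (v j).1 + 1) with h' | h'
      · exact Or.inl (List.prefix_take_iff.mpr ⟨List.take_prefix _ _,
          by simp only [he', List.length_take]; omega⟩)
      · exact Or.inr (List.prefix_take_iff.mpr ⟨List.take_prefix _ _,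
          by simp only [he', List.length_take]; omega⟩)
    · have : (fun i => eps (e' (v i)).1) = fun i => (v i).1 := by
        funext i
        have := congrArg Subtype.val (hre (v i))
        exact this
      show 𝒜.rel R fun i => eps (e' (v i)).1
      rw [this]
      exact h
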